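/- With q = e^{πiτ}, y = e^{2πiz}, the Weierstrass-type functions defined by ℘_{i,j}(z,τ) = (θ'_{i,j}/θ_{i,j})'(z,τ) satisfy as q-series identities: 4℘_{0,1}(y²,q²) = ℘_{0,1}(y,q) + ℘_{0,0}(y,q), 4℘_{1,1}(y²,q²) = ℘_{1,1}(y,q) + ℘_{1,0}(y,q), and ℘_{1,1}(y²,q) = ℘_{0,1}(y²,q²) + ℘_{1,1}(y²,q²), where ℘_{0,0}(y,q) = −4π² Σ_{m≥0}( q^{2m+1}y^{−1}/(1+q^{2m+1}y^{−1})² + q^{2m+1}y/(1+q^{2m+1}y)² ), ℘_{0,1}(y,q) = 4π² Σ_{m≥0}( q^{2m+1}y^{−1}/(1−q^{2m+1}y^{−1})² + q^{2m+1}y/(1−q^{2m+1}y)² ), ℘_{1,0}(y,q) = −4π²( y^{−1}/(1+y^{−1})² + Σ_{m≥1}( q^{2m}y^{−1}/(1+q^{2m}y^{−1})² + q^{2m}y/(1+q^{2m}y)² ) ), ℘_{1,1}(y,q) = 4π²( y^{−1}/(1−y^{−1})² + Σ_{m≥1}( q^{2m}y^{−1}/(1−q^{2m}y^{−1})² + q^{2m}y/(1−q^{2m}y)²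 ) ). -/

import Mathlib

open Real

/-- `℘₀₀(y,q) = −4π² Σ_{m≥0} ( q^{2m+1}y⁻¹/(1+q^{2m+1}y⁻¹)² + q^{2m+1}y/(1+q^{2m+1}y)² )`. -/
noncomputable def P00 (y q : ℂ) : ℂ :=
  -4 * (π : ℂ) ^ 2 * ∑' m : ℕ,
    (q ^ (2 * m + 1) * y⁻¹ / (1 + q ^ (2 * m + 1) * y⁻¹) ^ 2
      + q ^ (2 * m + 1) * y / (1 + q ^ (2 * m + 1) * y) ^ 2)

/-- `℘₀₁(y,q) = 4π² Σ_{m≥0} ( q^{2m+1}y⁻¹/(1−q^{2m+1}y⁻¹)² + q^{2m+1}y/(1−q^{2m+1}y)² )`. -/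
noncomputable def P01 (y q : ℂ) : ℂ :=
  4 * (π : ℂ) ^ 2 * ∑' m : ℕ,
    (q ^ (2 * m + 1) * y⁻¹ / (1 - q ^ (2 * m + 1) * y⁻¹) ^ 2
      + q ^ (2 * m + 1) * y / (1 - q ^ (2 * m + 1) * y) ^ 2)

/-- `℘₁₀(y,q) = −4π²( y⁻¹/(1+y⁻¹)² + Σ_{m≥1} ( q^{2m}y⁻¹/(1+q^{2m}y⁻¹)² + q^{2m}y/(1+q^{2m}y)² ) )`. -/
noncomputable def P10 (y q : ℂ) : ℂ :=
  -4 * (π : ℂ) ^ 2 * (y⁻¹ / (1 + y⁻¹) ^ 2 + ∑' m : ℕ,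
    (q ^ (2 * (m + 1)) * y⁻¹ / (1 + q ^ (2 * (m + 1)) * y⁻¹) ^ 2
      + q ^ (2 * (m + 1)) * y / (1 + q ^ (2 * (m + 1)) * y) ^ 2))

/-- `℘₁₁(y,q) = 4π²( y⁻¹/(1−y⁻¹)² + Σ_{m≥1} ( q^{2m}y⁻¹/(1−q^{2m}y⁻¹)² + q^{2m}y/(1−q^{2m}y)² ) )`. -/
noncomputable def P11 (y q : ℂ) : ℂ :=
  4 * (π : ℂ) ^ 2 * (y⁻¹ / (1 - y⁻¹) ^ 2 + ∑' m : ℕ,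
    (q ^ (2 * (m + 1)) * y⁻¹ / (1 - q ^ (2 * (m + 1)) * y⁻¹) ^ 2
      + q ^ (2 * (m + 1)) * y / (1 - q ^ (2 * (m + 1)) * y) ^ 2))

open Filter

/-- General comparison lemma: a series of terms `q^{e m} c / (d m)²` with `e m ≥ m`,
`‖q‖ < 1`, and `d m` close to `1`, is summable. -/
lemma summable_gen (q c : ℂ) (hq : ‖q‖ < 1) (e : ℕ → ℕ) (he : ∀ m, m ≤ e m)
    (d : ℕ → ℂ) (hd : ∀ m, ‖d m - 1‖ ≤ ‖q ^ e m * c‖) :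
    Summable (fun m => q ^ e m * c / d m ^ 2) := by
  have hq0 : (0:ℝ) ≤ ‖q‖ := norm_nonneg q
  have hten : Tendsto (fun m : ℕ => ‖q‖ ^ m * ‖c‖) atTop (nhds 0) := by
    simpa using (tendsto_pow_atTop_nhds_zero_of_lt_one hq0 hq).mul_const ‖c‖
  have hbound : ∀ m : ℕ, ‖q ^ e m * c‖ ≤ ‖q‖ ^ m * ‖c‖ := by
    intro m
    rw [norm_mul, norm_pow]
    exact mul_le_mul_of_nonneg_right (pow_le_pow_of_le_one hq0 hq.le (he m)) (norm_nonneg c)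
  apply Summable.of_norm_bounded_eventually_nat (g := fun m => 4 * ‖c‖ * ‖q‖ ^ m)
  · exact (summable_geometric_of_lt_one hq0 hq).mul_left _
  · filter_upwards [hten.eventually_lt_const (by norm_num : (0:ℝ) < 1/2)] with m hm
    have hsmall : ‖q ^ e m * c‖ ≤ 1/2 := (hbound m).trans hm.le
    have hd1 : (1:ℝ)/2 ≤ ‖d m‖ := by
      have h := norm_add_le (d m) (1 - d m)
      rw [add_sub_cancel] at h
      rw [norm_sub_rev (1:ℂ)] at h
      simp only [norm_one] at h
      linarith [(hd m).trans hsmall]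
    have hd2 : (0:ℝ) < ‖d m‖ := lt_of_lt_of_le (by norm_num) hd1
    rw [norm_div, norm_pow]
    rw [div_le_iff₀ (by positivity)]
    calc ‖q ^ e m * c‖ ≤ ‖q‖ ^ m * ‖c‖ := hbound m
      _ = (‖q‖ ^ m * ‖c‖) * 1 := by ring
      _ ≤ (‖q‖ ^ m * ‖c‖) * (4 * ‖d m‖ ^ 2) := by
          have h4 : (1:ℝ) ≤ 4 * ‖d m‖ ^ 2 := by nlinarith
          exact mul_le_mul_of_nonneg_left h4 (by positivity)
      _ = (4 * ‖c‖ * ‖q‖ ^ m) * ‖d m‖ ^ 2 := by ring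

lemma summable_neg (q c : ℂ) (hq : ‖q‖ < 1) (e : ℕ → ℕ) (he : ∀ m, m ≤ e m) :
    Summable (fun m => q ^ e m * c / (1 - q ^ e m * c) ^ 2) := by
  apply summable_gen q c hq e he
  intro m
  simp [norm_neg, sub_sub_cancel_left]

lemma summable_pos (q c : ℂ) (hq : ‖q‖ < 1) (e : ℕ → ℕ) (he : ∀ m, m ≤ e m) :
    Summable (fun m => q ^ e m * c / (1 + q ^ e m * c) ^ 2) := by
  apply summable_gen q c hq e he
  intro m
  simp

lemma frac_identity (w : ℂ) (h1 : 1 - w ≠ 0) (h2 : 1 + w ≠ 0) :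
    w / (1 - w) ^ 2 - w / (1 + w) ^ 2 = 4 * (w ^ 2 / (1 - w ^ 2) ^ 2) := by
  have h : 1 - w ^ 2 ≠ 0 := by
    intro h; apply mul_ne_zero h1 h2; linear_combination h
  field_simp
  ring

set_option maxHeartbeats 2000000 in
/-- The halving identities for the theta-derived Weierstrass functions:
`4℘₀₁(y²,q²) = ℘₀₁(y,q) + ℘₀₀(y,q)`, `4℘₁₁(y²,q²) = ℘₁₁(y,q) + ℘₁₀(y,q)`,
`℘₁₁(y²,q) = ℘₀₁(y²,q²) + ℘₁₁(y²,q²)`. -/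
theorem wp_halving_identities (y q : ℂ) (hq : ‖q‖ < 1) (hy : y ≠ 0)
    (h1 : ∀ m : ℕ, 1 - q ^ (m + 1) * y ≠ 0) (h2 : ∀ m : ℕ, 1 + q ^ (m + 1) * y ≠ 0)
    (h3 : ∀ m : ℕ, 1 - q ^ (m + 1) * y⁻¹ ≠ 0) (h4 : ∀ m : ℕ, 1 + q ^ (m + 1) * y⁻¹ ≠ 0)
    (h5 : 1 - y⁻¹ ≠ 0) (h6 : 1 + y⁻¹ ≠ 0) :
    4 * P01 (y ^ 2) (q ^ 2) = P01 y q + P00 y q ∧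
    4 * P11 (y ^ 2) (q ^ 2) = P11 y q + P10 y q ∧
    P11 (y ^ 2) q = P01 (y ^ 2) (q ^ 2) + P11 (y ^ 2) (q ^ 2) := by
  refine ⟨?_, ?_, ?_⟩
  · -- first identity
    have he : ∀ m : ℕ, m ≤ 2 * m + 1 := fun m => by omega
    have sA : Summable (fun m : ℕ =>
        q ^ (2 * m + 1) * y⁻¹ / (1 - q ^ (2 * m + 1) * y⁻¹) ^ 2
          + q ^ (2 * m + 1) * y / (1 - q ^ (2 * m + 1) * y) ^ 2) :=
      (summable_neg q y⁻¹ hq _ he).add (summable_neg q y hq _ he)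
    have sB : Summable (fun m : ℕ =>
        q ^ (2 * m + 1) * y⁻¹ / (1 + q ^ (2 * m + 1) * y⁻¹) ^ 2
          + q ^ (2 * m + 1) * y / (1 + q ^ (2 * m + 1) * y) ^ 2) :=
      (summable_pos q y⁻¹ hq _ he).add (summable_pos q y hq _ he)
    have hterm : ∀ m : ℕ,
        (q ^ (2 * m + 1) * y⁻¹ / (1 - q ^ (2 * m + 1) * y⁻¹) ^ 2
          + q ^ (2 * m + 1) * y / (1 - q ^ (2 * m + 1) * y) ^ 2)
        - (q ^ (2 * m + 1) * y⁻¹ / (1 + q ^ (2 * m + 1) * y⁻¹) ^ 2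
          + q ^ (2 * m + 1) * y / (1 + q ^ (2 * m + 1) * y) ^ 2)
        = 4 * ((q ^ 2) ^ (2 * m + 1) * (y ^ 2)⁻¹ / (1 - (q ^ 2) ^ (2 * m + 1) * (y ^ 2)⁻¹) ^ 2
          + (q ^ 2) ^ (2 * m + 1) * y ^ 2 / (1 - (q ^ 2) ^ (2 * m + 1) * y ^ 2) ^ 2) := by
      intro m
      have e1 := frac_identity (q ^ (2 * m + 1) * y⁻¹) (h3 (2 * m)) (h4 (2 * m))
      have e2 := frac_identity (q ^ (2 * m + 1) * y) (h1 (2 * m)) (h2 (2 * m))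
      have hw : (q ^ (2 * m + 1) * y) ^ 2 = (q ^ 2) ^ (2 * m + 1) * y ^ 2 := by ring
      have hw' : (q ^ (2 * m + 1) * y⁻¹) ^ 2 = (q ^ 2) ^ (2 * m + 1) * (y ^ 2)⁻¹ := by ring
      rw [← hw, ← hw']
      linear_combination e1 + e2
    have key : (∑' m : ℕ, (q ^ (2 * m + 1) * y⁻¹ / (1 - q ^ (2 * m + 1) * y⁻¹) ^ 2
          + q ^ (2 * m + 1) * y / (1 - q ^ (2 * m + 1) * y) ^ 2))
        - (∑' m : ℕ, (q ^ (2 * m + 1) * y⁻¹ / (1 + q ^ (2 * m + 1) * y⁻¹) ^ 2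
          + q ^ (2 * m + 1) * y / (1 + q ^ (2 * m + 1) * y) ^ 2))
        = 4 * ∑' m : ℕ, ((q ^ 2) ^ (2 * m + 1) * (y ^ 2)⁻¹ / (1 - (q ^ 2) ^ (2 * m + 1) * (y ^ 2)⁻¹) ^ 2
          + (q ^ 2) ^ (2 * m + 1) * y ^ 2 / (1 - (q ^ 2) ^ (2 * m + 1) * y ^ 2) ^ 2) := by
      rw [← Summable.tsum_sub sA sB, ← tsum_mul_left]
      exact tsum_congr hterm
    simp only [P01, P00]
    linear_combination (-(4 * (π:ℂ) ^ 2)) * key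
  · -- second identity
    have he : ∀ m : ℕ, m ≤ 2 * (m + 1) := fun m => by omega
    have sA : Summable (fun m : ℕ =>
        q ^ (2 * (m + 1)) * y⁻¹ / (1 - q ^ (2 * (m + 1)) * y⁻¹) ^ 2
          + q ^ (2 * (m + 1)) * y / (1 - q ^ (2 * (m + 1)) * y) ^ 2) :=
      (summable_neg q y⁻¹ hq _ he).add (summable_neg q y hq _ he)
    have sB : Summable (fun m : ℕ =>
        q ^ (2 * (m + 1)) * y⁻¹ / (1 + q ^ (2 * (m + 1)) * y⁻¹) ^ 2
          + q ^ (2 * (m + 1)) * y / (1 + q ^ (2 * (m + 1)) * y) ^ 2) :=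
      (summable_pos q y⁻¹ hq _ he).add (summable_pos q y hq _ he)
    have hterm : ∀ m : ℕ,
        (q ^ (2 * (m + 1)) * y⁻¹ / (1 - q ^ (2 * (m + 1)) * y⁻¹) ^ 2
          + q ^ (2 * (m + 1)) * y / (1 - q ^ (2 * (m + 1)) * y) ^ 2)
        - (q ^ (2 * (m + 1)) * y⁻¹ / (1 + q ^ (2 * (m + 1)) * y⁻¹) ^ 2
          + q ^ (2 * (m + 1)) * y / (1 + q ^ (2 * (m + 1)) * y) ^ 2)
        = 4 * ((q ^ 2) ^ (2 * (m + 1)) * (y ^ 2)⁻¹ / (1 - (q ^ 2) ^ (2 * (m + 1)) * (y ^ 2)⁻¹) ^ 2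
          + (q ^ 2) ^ (2 * (m + 1)) * y ^ 2 / (1 - (q ^ 2) ^ (2 * (m + 1)) * y ^ 2) ^ 2) := by
      intro m
      have e1 := frac_identity (q ^ (2 * (m + 1)) * y⁻¹) (h3 (2 * m + 1)) (h4 (2 * m + 1))
      have e2 := frac_identity (q ^ (2 * (m + 1)) * y) (h1 (2 * m + 1)) (h2 (2 * m + 1))
      have hw : (q ^ (2 * (m + 1)) * y) ^ 2 = (q ^ 2) ^ (2 * (m + 1)) * y ^ 2 := by ring
      have hw' : (q ^ (2 * (m + 1)) * y⁻¹) ^ 2 = (q ^ 2) ^ (2 * (m + 1)) * (y ^ 2)⁻¹ := by ring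
      rw [← hw, ← hw']
      linear_combination e1 + e2
    have key : (∑' m : ℕ, (q ^ (2 * (m + 1)) * y⁻¹ / (1 - q ^ (2 * (m + 1)) * y⁻¹) ^ 2
          + q ^ (2 * (m + 1)) * y / (1 - q ^ (2 * (m + 1)) * y) ^ 2))
        - (∑' m : ℕ, (q ^ (2 * (m + 1)) * y⁻¹ / (1 + q ^ (2 * (m + 1)) * y⁻¹) ^ 2
          + q ^ (2 * (m + 1)) * y / (1 + q ^ (2 * (m + 1)) * y) ^ 2))
        = 4 * ∑' m : ℕ, ((q ^ 2) ^ (2 * (m + 1)) * (y ^ 2)⁻¹ / (1 - (q ^ 2) ^ (2 * (m + 1)) * (y ^ 2)⁻¹) ^ 2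
          + (q ^ 2) ^ (2 * (m + 1)) * y ^ 2 / (1 - (q ^ 2) ^ (2 * (m + 1)) * y ^ 2) ^ 2) := by
      rw [← Summable.tsum_sub sA sB, ← tsum_mul_left]
      exact tsum_congr hterm
    have e0 := frac_identity y⁻¹ h5 h6
    have hw0 : (y⁻¹ : ℂ) ^ 2 = (y ^ 2)⁻¹ := by ring
    rw [hw0] at e0
    simp only [P11, P10]
    linear_combination (-(4 * (π:ℂ) ^ 2)) * key + (-(4 * (π:ℂ) ^ 2)) * e0
  · -- third identity
    have hCe : Summable (fun k : ℕ =>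
        q ^ (2 * (2 * k + 1)) * (y ^ 2)⁻¹ / (1 - q ^ (2 * (2 * k + 1)) * (y ^ 2)⁻¹) ^ 2
          + q ^ (2 * (2 * k + 1)) * (y ^ 2) / (1 - q ^ (2 * (2 * k + 1)) * (y ^ 2)) ^ 2) :=
      (summable_neg q (y ^ 2)⁻¹ hq _ (fun k => by omega)).add
        (summable_neg q (y ^ 2) hq _ (fun k => by omega))
    have hHo : Summable (fun k : ℕ =>
        q ^ (2 * (2 * k + 1 + 1)) * (y ^ 2)⁻¹ / (1 - q ^ (2 * (2 * k + 1 + 1)) * (y ^ 2)⁻¹) ^ 2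
          + q ^ (2 * (2 * k + 1 + 1)) * (y ^ 2) / (1 - q ^ (2 * (2 * k + 1 + 1)) * (y ^ 2)) ^ 2) :=
      (summable_neg q (y ^ 2)⁻¹ hq _ (fun k => by omega)).add
        (summable_neg q (y ^ 2) hq _ (fun k => by omega))
    have hsum : (∑' m : ℕ, (q ^ (2 * (m + 1)) * (y ^ 2)⁻¹ / (1 - q ^ (2 * (m + 1)) * (y ^ 2)⁻¹) ^ 2
          + q ^ (2 * (m + 1)) * (y ^ 2) / (1 - q ^ (2 * (m + 1)) * (y ^ 2)) ^ 2))
        = (∑' m : ℕ, ((q ^ 2) ^ (2 * m + 1) * (y ^ 2)⁻¹ / (1 - (q ^ 2) ^ (2 * m + 1) * (y ^ 2)⁻¹) ^ 2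
          + (q ^ 2) ^ (2 * m + 1) * (y ^ 2) / (1 - (q ^ 2) ^ (2 * m + 1) * (y ^ 2)) ^ 2))
        + (∑' m : ℕ, ((q ^ 2) ^ (2 * (m + 1)) * (y ^ 2)⁻¹ / (1 - (q ^ 2) ^ (2 * (m + 1)) * (y ^ 2)⁻¹) ^ 2
          + (q ^ 2) ^ (2 * (m + 1)) * (y ^ 2) / (1 - (q ^ 2) ^ (2 * (m + 1)) * (y ^ 2)) ^ 2)) := by
      rw [← tsum_even_add_odd (f := fun m : ℕ =>
          q ^ (2 * (m + 1)) * (y ^ 2)⁻¹ / (1 - q ^ (2 * (m + 1)) * (y ^ 2)⁻¹) ^ 2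
            + q ^ (2 * (m + 1)) * (y ^ 2) / (1 - q ^ (2 * (m + 1)) * (y ^ 2)) ^ 2) hCe hHo]
      congr 1
      · refine tsum_congr fun k => ?_
        rw [pow_mul q 2 (2 * k + 1)]
      · refine tsum_congr fun k => ?_
        rw [show 2 * (2 * k + 1 + 1) = 2 * (2 * (k + 1)) from by ring, pow_mul q 2 (2 * (k + 1))]
    simp only [P11, P01]
    rw [hsum]
    ring
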